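/- Let $f_1, f_2, f_3 : \mathbb{R} \to \mathbb{R}$ be functions satisfying $f_1(x) + f_2(y) + f_3(x+y) = 0$ for all $x, y$ in an open interval (i.e., for all $(x,y)$ in a nonempty open box $U \times V$ with the sum equation holding whenever $x \in U, y \in V$). If $f_1, f_2, f_3$ are continuous, then there exist constants $a, c_1, c_2 \in \mathbb{R}$ such that $f_1(x) = a x + c_1$ on $U$, $f_2(y) = a y + c_2$ on $V$, and $f_3(z) = -a z - c_1 - c_2$ on $U + V$. -/

import Mathlib

open Set

/-- Iterating a one-step additivity gives natural scaling. -/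
lemma nat_scale (r : ℝ → ℝ) (w : ℝ) (h0 : r 0 = 0) :
    ∀ n : ℕ, (∀ k : ℕ, k < n → r (((k : ℝ) + 1) * w) = r ((k : ℝ) * w) + r w) →
      r ((n : ℝ) * w) = (n : ℝ) * r w := by
  intro n
  induction n with
  | zero => intro _; simpa using h0
  | succ k ih =>
    intro h
    have hk := ih (fun j hj => h j (hj.trans (Nat.lt_succ_self k)))
    have hs := h k (Nat.lt_succ_self k)
    push_cast at hs hk ⊢
    rw [hs, hk]; ring

/-- Rational scaling inside a symmetric interval where additivity holds. -/
lemma rat_scale (δ : ℝ) (r : ℝ → ℝ)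
    (hadd : ∀ s t : ℝ, |s| < δ → |t| < δ → r (s + t) = r s + r t)
    (h0 : r 0 = 0) (u : ℝ) (hu : 0 < u) (huδ : u < δ)
    (p n : ℕ) (hn : 0 < n) (hpn : p ≤ n) :
    r (((p : ℝ) / n) * u) = ((p : ℝ) / n) * r u := by
  have hn' : (0 : ℝ) < n := by exact_mod_cast hn
  set w : ℝ := u / n with hw
  have hw0 : 0 < w := div_pos hu hn'
  have hkey : ∀ k : ℕ, k ≤ n → r ((k : ℝ) * w) = (k : ℝ) * r w := by
    intro k hk
    apply nat_scale r w h0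
    intro j hj
    have hjw : |(j : ℝ) * w| < δ := by
      rw [abs_of_nonneg (by positivity)]
      calc (j : ℝ) * w ≤ (n : ℝ) * w := by
            apply mul_le_mul_of_nonneg_right _ hw0.le
            exact_mod_cast (hj.trans_le hk).le
        _ = u := by rw [hw]; field_simp
        _ < δ := huδ
    have hww : |w| < δ := by
      rw [abs_of_nonneg hw0.le]
      calc w ≤ u := by
            rw [hw, div_le_iff₀ hn']
            nlinarith [hu.le, (show (1:ℝ) ≤ n by exact_mod_cast hn)]
        _ < δ := huδ
    have := hadd ((j : ℝ) * w) w hjw hww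
    rw [← this]; ring_nf
  have hnu : (n : ℝ) * w = u := by rw [hw]; field_simp
  have h1 := hkey n le_rfl
  have h2 := hkey p hpn
  rw [hnu] at h1
  have : ((p : ℝ) / n) * u = (p : ℝ) * w := by rw [hw]; field_simp
  rw [this, h2, h1]
  field_simp

/-- Real scaling by `t ∈ [0,1]`, via density of rationals and continuity. -/
lemma real_scale (δ : ℝ) (r : ℝ → ℝ)
    (hadd : ∀ s t : ℝ, |s| < δ → |t| < δ → r (s + t) = r s + r t)
    (hcont : ContinuousOn r (Ioo (-δ) δ))
    (h0 : r 0 = 0) (u : ℝ) (hu : 0 < u) (huδ : u < δ) :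
    ∀ t ∈ Icc (0:ℝ) 1, r (t * u) = t * r u := by
  have hδ : 0 < δ := hu.trans huδ
  set S : Set ℝ := Ioo (0:ℝ) 1 ∩ Set.range ((↑) : ℚ → ℝ) with hS
  have hclos : closure S = Icc (0:ℝ) 1 := by
    apply subset_antisymm
    · rw [← closure_Ioo (one_ne_zero' ℝ).symm]
      exact closure_mono inter_subset_left
    · rw [← closure_Ioo (one_ne_zero' ℝ).symm]
      refine closure_minimal ?_ isClosed_closure
      exact Rat.denseRange_cast.open_subset_closure_inter isOpen_Ioo
  have hmaps : MapsTo (fun t : ℝ => t * u) (Icc (0:ℝ) 1) (Ioo (-δ) δ) := by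
    intro t ht
    simp only [mem_Ioo]
    constructor
    · nlinarith [mul_nonneg ht.1 hu.le]
    · nlinarith [mul_le_of_le_one_left hu.le ht.2]
  have hcont1 : ContinuousOn (fun t : ℝ => r (t * u)) (Icc (0:ℝ) 1) :=
    hcont.comp (by fun_prop) hmaps
  have hcont2 : ContinuousOn (fun t : ℝ => t * r u) (Icc (0:ℝ) 1) := by fun_prop
  have heqS : EqOn (fun t : ℝ => r (t * u)) (fun t : ℝ => t * r u) S := by
    rintro t ⟨⟨ht0, ht1⟩, q, rfl⟩
    have hq0 : 0 ≤ q.num := by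
      have : (0:ℝ) < q.num / q.den := by rwa [← Rat.cast_def]
      have := (div_pos_iff.mp this)
      rcases this with ⟨h, _⟩ | ⟨_, h⟩
      · exact_mod_cast h.le
      · exact absurd h (not_lt.mpr (by positivity))
    have hqd : q.num ≤ (q.den : ℤ) := by
      have hden : (0:ℝ) < (q.den : ℝ) := by positivity
      have : (q.num : ℝ) / q.den < 1 := by rwa [← Rat.cast_def]
      have := (div_lt_one hden).mp this
      exact_mod_cast this.le
    set p : ℕ := q.num.toNat with hp
    have hpn : p ≤ q.den := by omega
    have hcast : ((q : ℝ)) = (p : ℝ) / (q.den : ℝ) := by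
      rw [Rat.cast_def]
      congr 1
      rw [hp]
      exact_mod_cast (Int.toNat_of_nonneg hq0).symm
    simp only
    rw [hcast]
    exact rat_scale δ r hadd h0 u hu huδ p q.den q.pos hpn
  exact heqS.of_subset_closure hcont1 hcont2
    ((inter_subset_left).trans Ioo_subset_Icc_self) (by rw [hclos])

/-- Linearity on the small symmetric interval. -/
lemma lin_small (δ : ℝ) (hδ : 0 < δ) (r : ℝ → ℝ)
    (hadd : ∀ s t : ℝ, |s| < δ → |t| < δ → r (s + t) = r s + r t)
    (hcont : ContinuousOn r (Ioo (-δ) δ)) :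
    ∀ v : ℝ, |v| < δ → r v = (r (δ/2) / (δ/2)) * v := by
  have h0 : r 0 = 0 := by
    have := hadd 0 0 (by simpa using hδ) (by simpa using hδ)
    simp at this
    linarith
  set A : ℝ := r (δ/2) / (δ/2) with hA
  have hhalf : (0:ℝ) < δ/2 := by linarith
  have hpos : ∀ v : ℝ, 0 < v → v < δ → r v = A * v := by
    intro v hv hvδ
    rcases le_or_gt v (δ/2) with hle | hlt
    · have := real_scale δ r hadd hcont h0 (δ/2) hhalf (by linarith) (v / (δ/2))
        ⟨by positivity, by rw [div_le_one hhalf]; exact hle⟩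
      rw [div_mul_cancel₀ _ hhalf.ne'] at this
      rw [this, hA]; ring
    · have := real_scale δ r hadd hcont h0 v hv hvδ ((δ/2) / v)
        ⟨by positivity, by rw [div_le_one hv]; exact hlt.le⟩
      rw [div_mul_cancel₀ _ hv.ne'] at this
      rw [hA, this]
      field_simp
  intro v hv
  rcases lt_trichotomy v 0 with hneg | rfl | hposv
  · have habs : |(-v)| < δ := by rwa [abs_neg]
    have h1 : r (-v) = A * (-v) := hpos (-v) (by linarith) (by rw [abs_of_neg hneg] at hv; linarith)
    have h2 := hadd v (-v) hv habs
    simp at h2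
    rw [h0] at h2
    have : r v = - r (-v) := by linarith
    rw [this, h1]; ring
  · simp [h0]
  · exact hpos v hposv (by rwa [abs_of_pos hposv] at hv)

/-- Local Cauchy: continuous, additivity for arguments in two intervals,
implies linear on the sum interval. -/
lemma local_cauchy (δ₁ δ₂ : ℝ) (h₁ : 0 < δ₁) (h₂ : 0 < δ₂) (r : ℝ → ℝ)
    (hadd : ∀ s t : ℝ, |s| < δ₁ → |t| < δ₂ → r (s + t) = r s + r t)
    (hcont : ContinuousOn r (Ioo (-(min δ₁ δ₂)) (min δ₁ δ₂))) :
    ∃ A : ℝ, ∀ u : ℝ, |u| < δ₁ + δ₂ → r u = A * u := by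
  set δ := min δ₁ δ₂ with hδdef
  have hδ : 0 < δ := lt_min h₁ h₂
  have hδ1 : δ ≤ δ₁ := min_le_left _ _
  have hδ2 : δ ≤ δ₂ := min_le_right _ _
  have hadds : ∀ s t : ℝ, |s| < δ → |t| < δ → r (s + t) = r s + r t :=
    fun s t hs ht => hadd s t (hs.trans_le hδ1) (ht.trans_le hδ2)
  have h0 : r 0 = 0 := by
    have := hadds 0 0 (by simpa using hδ) (by simpa using hδ)
    simp at this; linarith
  set A : ℝ := r (δ/2) / (δ/2) with hA
  have hsmall : ∀ v : ℝ, |v| < δ → r v = A * v := lin_small δ hδ r hadds hcont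
  -- extend to (-δ₁, δ₁)
  have hext1 : ∀ s : ℝ, |s| < δ₁ → r s = A * s := by
    intro s hs
    obtain ⟨n, hn⟩ := exists_nat_gt (|s| / δ)
    have hn0 : 0 < n := by
      by_contra h
      push_neg at h
      interval_cases n
      simp at hn
      nlinarith [abs_nonneg s, div_nonneg (abs_nonneg s) hδ.le]
    have hn0' : (0:ℝ) < n := by exact_mod_cast hn0
    set w : ℝ := s / n with hw
    have hwδ : |w| < δ := by
      have hsn : |s| < n * δ := by
        have := (div_lt_iff₀ hδ).mp hn
        linarith [mul_comm (n:ℝ) δ]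
      rw [hw, abs_div, abs_of_pos hn0', div_lt_iff₀ hn0']
      linarith [mul_comm (n:ℝ) δ]
    have hstep : ∀ k : ℕ, k < n → r (((k:ℝ)+1) * w) = r ((k:ℝ)*w) + r w := by
      intro k hk
      have hkw : |(k:ℝ) * w| < δ₁ := by
        rw [abs_mul, abs_of_nonneg (by positivity : (0:ℝ) ≤ (k:ℝ))]
        calc (k:ℝ) * |w| ≤ (n:ℝ) * |w| := by
              apply mul_le_mul_of_nonneg_right _ (abs_nonneg w)
              exact_mod_cast hk.le
          _ = |s| := by rw [hw, abs_div, abs_of_pos hn0']; field_simp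
          _ < δ₁ := hs
      have := hadd ((k:ℝ)*w) w hkw (hwδ.trans_le hδ2)
      rw [← this]; ring_nf
    have hns : (n:ℝ) * w = s := by rw [hw]; field_simp
    have := nat_scale r w h0 n hstep
    rw [hns] at this
    rw [this, hsmall w hwδ]
    rw [← hns]; ring
  -- extend to (-δ₂, δ₂)
  have hext2 : ∀ t : ℝ, |t| < δ₂ → r t = A * t := by
    intro s hs
    obtain ⟨n, hn⟩ := exists_nat_gt (|s| / δ)
    have hn0 : 0 < n := by
      by_contra h
      push_neg at h
      interval_cases n
      simp at hn
      nlinarith [abs_nonneg s, div_nonneg (abs_nonneg s) hδ.le]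
    have hn0' : (0:ℝ) < n := by exact_mod_cast hn0
    set w : ℝ := s / n with hw
    have hwδ : |w| < δ := by
      have hsn : |s| < n * δ := by
        have := (div_lt_iff₀ hδ).mp hn
        linarith [mul_comm (n:ℝ) δ]
      rw [hw, abs_div, abs_of_pos hn0', div_lt_iff₀ hn0']
      linarith [mul_comm (n:ℝ) δ]
    have hstep : ∀ k : ℕ, k < n → r (((k:ℝ)+1) * w) = r ((k:ℝ)*w) + r w := by
      intro k hk
      have hkw : |(k:ℝ) * w| < δ₂ := by
        rw [abs_mul, abs_of_nonneg (by positivity : (0:ℝ) ≤ (k:ℝ))]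
        calc (k:ℝ) * |w| ≤ (n:ℝ) * |w| := by
              apply mul_le_mul_of_nonneg_right _ (abs_nonneg w)
              exact_mod_cast hk.le
          _ = |s| := by rw [hw, abs_div, abs_of_pos hn0']; field_simp
          _ < δ₂ := hs
      have := hadd w ((k:ℝ)*w) (hwδ.trans_le hδ1) hkw
      rw [show ((k:ℝ)+1)*w = w + (k:ℝ)*w by ring, this]; ring
    have hns : (n:ℝ) * w = s := by rw [hw]; field_simp
    have := nat_scale r w h0 n hstep
    rw [hns] at this
    rw [this, hsmall w hwδ]
    rw [← hns]; ring
  refine ⟨A, fun u hu => ?_⟩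
  have hΔ : (0:ℝ) < δ₁ + δ₂ := by linarith
  set s : ℝ := u * (δ₁ / (δ₁ + δ₂)) with hsdef
  set t : ℝ := u * (δ₂ / (δ₁ + δ₂)) with htdef
  have hst : s + t = u := by rw [hsdef, htdef]; field_simp
  have hs1 : |s| < δ₁ := by
    rw [hsdef, abs_mul, abs_of_pos (by positivity : (0:ℝ) < δ₁ / (δ₁ + δ₂))]
    rw [mul_div_assoc'] at *
    rw [div_lt_iff₀ hΔ]
    nlinarith
  have ht2 : |t| < δ₂ := by
    rw [htdef, abs_mul, abs_of_pos (by positivity : (0:ℝ) < δ₂ / (δ₁ + δ₂))]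
    rw [mul_div_assoc'] at *
    rw [div_lt_iff₀ hΔ]
    nlinarith
  have := hadd s t hs1 ht2
  rw [hst] at this
  rw [this, hext1 s hs1, hext2 t ht2, ← hst]
  ring

theorem stmt7 (a b c d : ℝ) (hab : a < b) (hcd : c < d)
    (f₁ f₂ f₃ : ℝ → ℝ)
    (hc₁ : ContinuousOn f₁ (Set.Ioo a b))
    (hc₂ : ContinuousOn f₂ (Set.Ioo c d))
    (hc₃ : ContinuousOn f₃ (Set.image2 (· + ·) (Set.Ioo a b) (Set.Ioo c d)))
    (heq : ∀ x ∈ Set.Ioo a b, ∀ y ∈ Set.Ioo c d, f₁ x + f₂ y + f₃ (x + y) = 0) :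
    ∃ A c₁ c₂ : ℝ,
      (∀ x ∈ Set.Ioo a b, f₁ x = A * x + c₁) ∧
      (∀ y ∈ Set.Ioo c d, f₂ y = A * y + c₂) ∧
      (∀ z ∈ Set.image2 (· + ·) (Set.Ioo a b) (Set.Ioo c d),
        f₃ z = -A * z - c₁ - c₂) := by
  obtain ⟨x₀, hx₀def⟩ : ∃ x₀ : ℝ, x₀ = (a + b) / 2 := ⟨_, rfl⟩
  obtain ⟨y₀, hy₀def⟩ : ∃ y₀ : ℝ, y₀ = (c + d) / 2 := ⟨_, rfl⟩
  obtain ⟨δ₁, hδ₁def⟩ : ∃ δ₁ : ℝ, δ₁ = (b - a) / 2 := ⟨_, rfl⟩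
  obtain ⟨δ₂, hδ₂def⟩ : ∃ δ₂ : ℝ, δ₂ = (d - c) / 2 := ⟨_, rfl⟩
  have hδ₁ : 0 < δ₁ := by rw [hδ₁def]; linarith
  have hδ₂ : 0 < δ₂ := by rw [hδ₂def]; linarith
  have hmem1 : ∀ s : ℝ, |s| < δ₁ → x₀ + s ∈ Set.Ioo a b := by
    intro s hs
    rw [abs_lt, hδ₁def] at hs
    rw [Set.mem_Ioo, hx₀def]
    constructor <;> [linarith [hs.1]; linarith [hs.2]]
  have hmem2 : ∀ t : ℝ, |t| < δ₂ → y₀ + t ∈ Set.Ioo c d := by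
    intro t ht
    rw [abs_lt, hδ₂def] at ht
    rw [Set.mem_Ioo, hy₀def]
    constructor <;> [linarith [ht.1]; linarith [ht.2]]
  have hx₀ : x₀ ∈ Set.Ioo a b := by
    have := hmem1 0 (by simpa using hδ₁); simpa using this
  have hy₀ : y₀ ∈ Set.Ioo c d := by
    have := hmem2 0 (by simpa using hδ₂); simpa using this
  obtain ⟨r, hrdef⟩ : ∃ r : ℝ → ℝ, r = fun u => -f₃ (x₀ + y₀ + u) - f₁ x₀ - f₂ y₀ :=
    ⟨_, rfl⟩
  have hre1 : ∀ s : ℝ, |s| < δ₁ → r s = f₁ (x₀ + s) - f₁ x₀ := by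
    intro s hs
    have h := heq (x₀ + s) (hmem1 s hs) y₀ hy₀
    rw [show x₀ + s + y₀ = x₀ + y₀ + s by ring] at h
    simp only [hrdef]
    linarith
  have hre2 : ∀ t : ℝ, |t| < δ₂ → r t = f₂ (y₀ + t) - f₂ y₀ := by
    intro t ht
    have h := heq x₀ hx₀ (y₀ + t) (hmem2 t ht)
    rw [show x₀ + (y₀ + t) = x₀ + y₀ + t by ring] at h
    simp only [hrdef]
    linarith
  have hadd : ∀ s t : ℝ, |s| < δ₁ → |t| < δ₂ → r (s + t) = r s + r t := by
    intro s t hs ht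
    have h := heq (x₀ + s) (hmem1 s hs) (y₀ + t) (hmem2 t ht)
    rw [show x₀ + s + (y₀ + t) = x₀ + y₀ + (s + t) by ring] at h
    rw [hre1 s hs, hre2 t ht]
    simp only [hrdef]
    linarith
  have hcont : ContinuousOn r (Set.Ioo (-(min δ₁ δ₂)) (min δ₁ δ₂)) := by
    have hsub : ∀ s ∈ Set.Ioo (-(min δ₁ δ₂)) (min δ₁ δ₂), |s| < δ₁ := by
      intro s hs
      rw [abs_lt]
      have h1 := hs.1
      have h2 := hs.2
      have := min_le_left δ₁ δ₂
      constructor <;> linarith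
    apply ContinuousOn.congr (f := fun s => f₁ (x₀ + s) - f₁ x₀)
    · apply ContinuousOn.sub _ continuousOn_const
      apply hc₁.comp (by fun_prop)
      intro s hs
      exact hmem1 s (hsub s hs)
    · intro s hs
      exact hre1 s (hsub s hs)
  obtain ⟨A, hA⟩ := local_cauchy δ₁ δ₂ hδ₁ hδ₂ r hadd hcont
  have key1 : ∀ x ∈ Set.Ioo a b, f₁ x = A * x + (f₁ x₀ - A * x₀) := by
    intro x hx
    have hs : |x - x₀| < δ₁ := by
      rw [abs_lt, hx₀def, hδ₁def]
      constructor <;> [linarith [hx.1]; linarith [hx.2]]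
    have h1 := hre1 (x - x₀) hs
    have h2 := hA (x - x₀) (hs.trans (by linarith))
    rw [show x₀ + (x - x₀) = x by ring] at h1
    rw [h1] at h2
    linarith
  have key2 : ∀ y ∈ Set.Ioo c d, f₂ y = A * y + (f₂ y₀ - A * y₀) := by
    intro y hy
    have ht : |y - y₀| < δ₂ := by
      rw [abs_lt, hy₀def, hδ₂def]
      constructor <;> [linarith [hy.1]; linarith [hy.2]]
    have h1 := hre2 (y - y₀) ht
    have h2 := hA (y - y₀) (ht.trans (by linarith))
    rw [show y₀ + (y - y₀) = y by ring] at h1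
    rw [h1] at h2
    linarith
  refine ⟨A, f₁ x₀ - A * x₀, f₂ y₀ - A * y₀, key1, key2, ?_⟩
  rintro z ⟨x, hx, y, hy, rfl⟩
  have h := heq x hx y hy
  have hfx := key1 x hx
  have hfy := key2 y hy
  simp only
  linarith
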